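/- The conjugate of a sequentially congruent partition is a frequency congruent partition, i.e., a partition in which each part i occurs with frequency divisible by i; conversely, the conjugate of a frequency congruent partition is sequentially congruent. -/

import Mathlib

/-- A partition represented as a weakly decreasing list of positive integers. -/
def IsPartition (l : List ℕ) : Prop :=
  l.Pairwise (· ≥ ·) ∧ ∀ x ∈ l, 0 < x

/-- Sequentially congruent: `λ_i ≡ λ_{i+1} (mod i)` for `1 ≤ i ≤ r-1` and `λ_r ≡ 0 (mod r)`
(0-indexed, with the convention `λ_{r+1} = 0`). -/
def SeqCongruent (l : List ℕ) : Prop :=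
  ∀ j < l.length, l.getD j 0 ≡ l.getD (j+1) 0 [MOD j+1]

/-- The map `π`: `π(λ)_i = i·λ_i + Σ_{j=i+1}^r λ_j` (1-indexed). -/
def piMap (l : List ℕ) : List ℕ :=
  (List.range l.length).map (fun j => (j+1) * l.getD j 0 + (l.drop (j+1)).sum)

/-- The map `σ`: the partition in which `i` occurs with frequency `(φ_i - φ_{i+1})/i`. -/
def sigmaMap (l : List ℕ) : List ℕ :=
  ((List.range l.length).reverse).flatMap
    (fun j => List.replicate ((l.getD j 0 - l.getD (j+1) 0) / (j+1)) (j+1))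

/-- The conjugate partition: its `i`-th part is the number of parts of `l` that are `≥ i`. -/
def conj (l : List ℕ) : List ℕ :=
  (List.range (l.getD 0 0)).map (fun i => l.countP (fun x => decide (i + 1 ≤ x)))

/-- Frequency congruent: each part `i` occurs with frequency divisible by `i`. -/
def FreqCongruent (l : List ℕ) : Prop :=
  ∀ i, 0 < i → i ∣ l.count i

lemma countP_le_split (l : List ℕ) (k : ℕ) :
    l.countP (fun x => decide (k ≤ x)) =
      l.count k + l.countP (fun x => decide (k + 1 ≤ x)) := by
  induction l with
  | nil => simp
  | cons a t ih =>
      simp only [List.countP_cons, List.count_cons, ih]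
      by_cases h1 : k ≤ a <;> by_cases h2 : a = k <;> by_cases h3 : k + 1 ≤ a <;>
        simp [h1, h2, h3] <;> omega

lemma countP_ge_of_sorted (l : List ℕ) (hs : l.Pairwise (· ≥ ·)) (k m : ℕ) :
    m + 1 ≤ l.countP (fun x => decide (k ≤ x)) ↔ m < l.length ∧ k ≤ l.getD m 0 := by
  induction l generalizing m with
  | nil => simp
  | cons a t ih =>
      rw [List.pairwise_cons] at hs
      obtain ⟨ha, ht⟩ := hs
      by_cases hk : k ≤ a
      · cases m with
        | zero => simp [List.countP_cons, hk]
        | succ m' =>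
            simp only [List.countP_cons, hk, decide_true, if_pos rfl, List.length_cons,
              List.getD_cons_succ, if_true]
            rw [show (m' + 1 + 1 ≤ t.countP (fun x => decide (k ≤ x)) + 1) ↔
                (m' + 1 ≤ t.countP (fun x => decide (k ≤ x))) from by omega]
            rw [ih ht m']
            omega
      · have h0 : (a :: t).countP (fun x => decide (k ≤ x)) = 0 := by
          rw [List.countP_eq_zero]
          intro x hx
          simp only [decide_eq_true_eq]
          rcases List.mem_cons.mp hx with h | h
          · omega
          · have := ha x h; omega
        rw [h0]
        constructor
        · omega
        · rintro ⟨hm, hkm⟩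
          exfalso
          rw [List.getD_eq_getElem _ _ hm] at hkm
          have hmem := List.getElem_mem (l := a :: t) (n := m) hm
          rcases List.mem_cons.mp hmem with h | h
          · omega
          · have := ha _ h; omega

lemma getD_anti (l : List ℕ) (hs : l.Pairwise (· ≥ ·)) {i j : ℕ} (hij : i ≤ j) :
    l.getD j 0 ≤ l.getD i 0 := by
  by_cases hj : j < l.length
  · have h1 : j + 1 ≤ l.countP (fun x => decide (l.getD j 0 ≤ x)) :=
      (countP_ge_of_sorted l hs _ j).mpr ⟨hj, le_refl _⟩
    have h2 := (countP_ge_of_sorted l hs (l.getD j 0) i).mp (by omega)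
    exact h2.2
  · rw [List.getD_eq_default _ _ (by omega)]
    omega

def conj' (l : List ℕ) : List ℕ :=
  (List.range (l.getD 0 0)).map (fun i => l.countP (fun x => decide (i + 1 ≤ x)))

lemma conj_getD (l : List ℕ) (hs : l.Pairwise (· ≥ ·)) (i : ℕ) :
    (conj' l).getD i 0 = l.countP (fun x => decide (i + 1 ≤ x)) := by
  by_cases hi : i < l.getD 0 0
  · rw [conj', List.getD_eq_getElem _ _ (by simpa using hi)]
    simp
  · rw [List.getD_eq_default _ _ (by simp only [conj', List.length_map, List.length_range]; omega)]
    symm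
    rw [List.countP_eq_zero]
    intro x hx
    simp only [decide_eq_true_eq]
    obtain ⟨m, hm, hxm⟩ := List.mem_iff_getElem.mp hx
    have : l.getD m 0 ≤ l.getD 0 0 := getD_anti l hs (Nat.zero_le m)
    rw [List.getD_eq_getElem _ _ hm, hxm] at this
    omega

lemma countP_range_lt (N t : ℕ) :
    (List.range N).countP (fun i => decide (i < t)) = min t N := by
  induction N with
  | zero => simp
  | succ n ih =>
      rw [List.range_succ, List.countP_append, ih, List.countP_singleton]
      by_cases h : n < t <;> simp [h] <;> omega

lemma countP_conj (l : List ℕ) (hs : l.Pairwise (· ≥ ·)) (m : ℕ) :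
    (conj' l).countP (fun x => decide (m + 1 ≤ x)) = l.getD m 0 := by
  rw [conj', List.countP_map]
  by_cases hm : m < l.length
  · have hcong : ∀ x ∈ List.range (l.getD 0 0),
        ((fun x => decide (m + 1 ≤ x)) ∘ (fun i => l.countP (fun y => decide (i + 1 ≤ y)))) x =
          decide (x < l.getD m 0) := by
      intro x _
      simp only [Function.comp_apply, decide_eq_decide]
      rw [countP_ge_of_sorted l hs (x+1) m]
      omega
    rw [List.countP_congr (fun x hx => by rw [hcong x hx])]
    rw [countP_range_lt]
    have := getD_anti l hs (Nat.zero_le m)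
    omega
  · have hz : l.getD m 0 = 0 := List.getD_eq_default _ _ (by omega)
    rw [hz]
    rw [List.countP_eq_zero]
    intro x hx
    simp only [Function.comp_apply, decide_eq_true_eq]
    intro hcon
    have := (countP_ge_of_sorted l hs (x+1) m).mp hcon
    omega

theorem stmt11 (l : List ℕ) (hl : IsPartition l) :
    (SeqCongruent l → FreqCongruent (conj l)) ∧
      (FreqCongruent l → SeqCongruent (conj l)) := by
  obtain ⟨hs, -⟩ := hl
  have hconj : conj l = conj' l := rfl
  constructor
  · intro hseq m hm
    obtain ⟨j, rfl⟩ : ∃ j, m = j + 1 := ⟨m - 1, by omega⟩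
    have hsplit := countP_le_split (conj' l) (j+1)
    rw [countP_conj l hs j, countP_conj l hs (j+1)] at hsplit
    have hd : (j+1) ∣ l.getD j 0 - l.getD (j+1) 0 := by
      by_cases hj : j < l.length
      · exact (Nat.modEq_iff_dvd' (getD_anti l hs (by omega))).mp (hseq j hj).symm
      · rw [List.getD_eq_default _ _ (by omega), List.getD_eq_default _ _ (by omega)]
        simp
    have hc : (conj' l).count (j+1) = l.getD j 0 - l.getD (j+1) 0 := by
      have hle := getD_anti l hs (show j ≤ j + 1 by omega)
      omega
    rw [hconj, hc]
    exact hd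
  · intro hf j hj
    rw [hconj] at hj ⊢
    rw [Nat.ModEq]
    rw [conj_getD l hs j, conj_getD l hs (j+1)]
    rw [← Nat.ModEq]
    have hsplit := countP_le_split l (j+1)
    have hdvd := hf (j+1) (by omega)
    refine ((Nat.modEq_iff_dvd' (by omega)).mpr ?_).symm
    have heq : l.countP (fun x => decide (j+1 ≤ x)) - l.countP (fun x => decide (j+1+1 ≤ x))
        = l.count (j+1) := by omega
    rw [heq]
    exact hdvd
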